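/- For any real α > 0 and any even natural number λ ≥ 2, and any nonnegative reals w̄_even and w̄_odd, the ratio (w̄_even + w̄_odd + 4α) / min(w̄_even, w̄_odd + 4α/λ, 4α) is at least 3 - 1/λ (with the convention that the ratio is +∞ if the denominator is 0). -/

import Mathlib

/-- Lower bound ratio for online rematching: for α > 0, even λ ≥ 2 and
nonnegative w̄_even, w̄_odd, the ratio (w̄_even + w̄_odd + 4α)/min(w̄_even, w̄_odd + 4α/λ, 4α)
is at least 3 - 1/λ (stated multiplicatively to handle a zero denominator as +∞). -/
theorem rematching_lower_bound_ratio (α : ℝ) (hα : 0 < α) (lam : ℕ)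
    (hlam : 2 ≤ lam) (hev : Even lam) (we wo : ℝ) (hwe : 0 ≤ we) (hwo : 0 ≤ wo) :
    (3 - 1 / (lam : ℝ)) * min we (min (wo + 4 * α / lam) (4 * α)) ≤ we + wo + 4 * α := by
  have hL : (2:ℝ) ≤ lam := by exact_mod_cast hlam
  have hLpos : (0:ℝ) < lam := by linarith
  set m := min we (min (wo + 4 * α / lam) (4 * α)) with hm
  have h1 : m ≤ we := min_le_left _ _
  have h2 : m ≤ wo + 4 * α / lam := (min_le_right _ _).trans (min_le_left _ _)
  have h3 : m ≤ 4 * α := (min_le_right _ _).trans (min_le_right _ _)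
  have hm0 : 0 ≤ m := by
    have : 0 ≤ 4 * α / lam := by positivity
    simp only [hm, le_min_iff]
    refine ⟨hwe, by linarith, by linarith⟩
  have hinv : 1 / (lam:ℝ) ≤ 1/2 := by
    rw [div_le_div_iff₀ hLpos (by norm_num)]; linarith
  have hinvpos : 0 < 1 / (lam:ℝ) := by positivity
  have key : (1 - 1/(lam:ℝ)) * m ≤ 4 * α - 4 * α / lam := by
    have : (1 - 1/(lam:ℝ)) * m ≤ (1 - 1/(lam:ℝ)) * (4 * α) := by
      apply mul_le_mul_of_nonneg_left h3; linarith
    have heq : (1 - 1/(lam:ℝ)) * (4 * α) = 4 * α - 4 * α / lam := by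
      field_simp
    linarith
  nlinarith [key, h1, h2]
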